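/- Let n : ℝ^d → (0,∞) with √n ∈ H¹(ℝ^d), and let u ∈ H¹(ℝ^d) satisfy |u| ≤ M√n a.e. and u/√n weakly differentiable. Then the identity ∫ n |∇(u/√n)|² dx = ∫ |∇u|² dx − ∫ (∇√n · ∇|u|²)/√n dx + ∫ (|∇√n|²/n)|u|² dx holds, all integrals being finite. -/

import Mathlib

open MeasureTheory Real Filter Topology InnerProductSpace

theorem my_aemeasurable_of_ae_continuousAt {α β : Type*} [MeasurableSpace α]
    [TopologicalSpace α] [OpensMeasurableSpace α] [EMetricSpace β] [MeasurableSpace β]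
    [BorelSpace β] {μ : Measure α} {f : α → β} (h : ∀ᵐ x ∂μ, ContinuousAt f x) :
    AEMeasurable f μ := by
  have hD : MeasurableSet {x | ContinuousAt f x} := measurableSet_of_continuousAt f
  have hc : ContinuousOn f {x | ContinuousAt f x} := fun x hx => hx.continuousWithinAt
  have h2 : AEMeasurable f (μ.restrict {x | ContinuousAt f x}) := hc.aemeasurable hD
  rw [Measure.restrict_eq_self_of_ae_mem (by exact h)] at h2; exact h2

theorem my_key {E : Type*} [NormedAddCommGroup E] [InnerProductSpace ℝ E]
    (g gn q : E) (u s : ℝ) (hs : 0 < s)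
    (hq : q = u • ((-(s^2)⁻¹) • gn) + s⁻¹ • g) :
    s^2 * ‖q‖^2 = ‖g‖^2 - (2*u) * (inner ℝ gn g : ℝ) / s + ‖gn‖^2 / s^2 * u^2 := by
  have hg : ‖g‖^2 = (inner ℝ g g : ℝ) := (real_inner_self_eq_norm_sq g).symm
  have hgn : ‖gn‖^2 = (inner ℝ gn gn : ℝ) := (real_inner_self_eq_norm_sq gn).symm
  have hqq : ‖q‖^2 = (inner ℝ q q : ℝ) := (real_inner_self_eq_norm_sq q).symm
  rw [hqq, hg, hgn, hq]
  simp only [inner_add_left, inner_add_right, real_inner_smul_left, real_inner_smul_right,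
    real_inner_comm g gn]
  field_simp
  ring

theorem my_grad {E : Type*} [NormedAddCommGroup E] [InnerProductSpace ℝ E] [CompleteSpace E]
    (n u : E → ℝ) (gn g q : E) (x : E) (hnx : 0 < n x)
    (hgn : HasGradientAt (fun y => Real.sqrt (n y)) gn x)
    (hg : HasGradientAt u g x)
    (hq : HasGradientAt (fun y => u y / Real.sqrt (n y)) q x) :
    q = u x • ((-((Real.sqrt (n x))^2)⁻¹) • gn) + (Real.sqrt (n x))⁻¹ • g := by
  have hs : Real.sqrt (n x) ≠ 0 := (Real.sqrt_pos.2 hnx).ne'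
  have hinv : HasFDerivAt (fun y => (Real.sqrt (n y))⁻¹)
      ((-((Real.sqrt (n x))^2)⁻¹) • (toDual ℝ E gn)) x := by
    have h2 := (hasDerivAt_inv hs).comp_hasFDerivAt x hgn.hasFDerivAt
    exact h2
  have hmul := hg.hasFDerivAt.mul hinv
  have hdiv : HasFDerivAt (fun y => u y / Real.sqrt (n y))
      (u x • ((-((Real.sqrt (n x))^2)⁻¹) • (toDual ℝ E gn)) + (Real.sqrt (n x))⁻¹ • (toDual ℝ E g)) x := by
    simp only [div_eq_mul_inv]
    exact hmul
  have huniq := hq.hasFDerivAt.unique hdiv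
  have h3 := congrArg (toDual ℝ E).symm huniq
  simpa using h3

/-- For n > 0 with √n ∈ H¹ and u = u₁ + i u₂ ∈ H¹ with |u| ≤ M√n a.e. and u/√n weakly
differentiable (gradients gn of √n, g1,g2 of u₁,u₂, q1,q2 of u₁/√n, u₂/√n), one has
∫ n |∇(u/√n)|² = ∫ |∇u|² − ∫ (∇√n·∇|u|²)/√n + ∫ (|∇√n|²/n)|u|², all integrals finite. -/
theorem stmt6 {d : ℕ} (n u1 u2 : EuclideanSpace ℝ (Fin d) → ℝ)
    (gn g1 g2 q1 q2 : EuclideanSpace ℝ (Fin d) → EuclideanSpace ℝ (Fin d))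
    (hn : ∀ᵐ x ∂volume, 0 < n x)
    (hgn : ∀ᵐ x ∂volume, HasGradientAt (fun y => Real.sqrt (n y)) (gn x) x)
    (hg1 : ∀ᵐ x ∂volume, HasGradientAt u1 (g1 x) x)
    (hg2 : ∀ᵐ x ∂volume, HasGradientAt u2 (g2 x) x)
    (hq1 : ∀ᵐ x ∂volume, HasGradientAt (fun y => u1 y / Real.sqrt (n y)) (q1 x) x)
    (hq2 : ∀ᵐ x ∂volume, HasGradientAt (fun y => u2 y / Real.sqrt (n y)) (q2 x) x)
    (M : ℝ)
    (hM : ∀ᵐ x ∂volume, Real.sqrt (u1 x ^ 2 + u2 x ^ 2) ≤ M * Real.sqrt (n x))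
    (hu : Integrable (fun x => u1 x ^ 2 + u2 x ^ 2))
    (hgradu : Integrable (fun x => ‖g1 x‖ ^ 2 + ‖g2 x‖ ^ 2))
    (hgradn : Integrable (fun x => ‖gn x‖ ^ 2)) :
    Integrable (fun x => n x * (‖q1 x‖ ^ 2 + ‖q2 x‖ ^ 2))
    ∧ Integrable (fun x => ‖g1 x‖ ^ 2 + ‖g2 x‖ ^ 2)
    ∧ Integrable (fun x =>
        (inner ℝ (gn x) ((2 * u1 x) • g1 x + (2 * u2 x) • g2 x) : ℝ) / Real.sqrt (n x))
    ∧ Integrable (fun x => ‖gn x‖ ^ 2 / n x * (u1 x ^ 2 + u2 x ^ 2))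
    ∧ (∫ x, n x * (‖q1 x‖ ^ 2 + ‖q2 x‖ ^ 2))
        = (∫ x, (‖g1 x‖ ^ 2 + ‖g2 x‖ ^ 2))
          - (∫ x, (inner ℝ (gn x) ((2 * u1 x) • g1 x + (2 * u2 x) • g2 x) : ℝ) / Real.sqrt (n x))
          + ∫ x, ‖gn x‖ ^ 2 / n x * (u1 x ^ 2 + u2 x ^ 2) := by
  -- the pointwise a.e. identity
  have key : ∀ᵐ x ∂volume, n x * (‖q1 x‖ ^ 2 + ‖q2 x‖ ^ 2)
      = (‖g1 x‖ ^ 2 + ‖g2 x‖ ^ 2)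
        - (inner ℝ (gn x) ((2 * u1 x) • g1 x + (2 * u2 x) • g2 x) : ℝ) / Real.sqrt (n x)
        + ‖gn x‖ ^ 2 / n x * (u1 x ^ 2 + u2 x ^ 2) := by
    filter_upwards [hn, hgn, hg1, hg2, hq1, hq2] with x hnx hgnx hg1x hg2x hq1x hq2x
    have hs0 : 0 < Real.sqrt (n x) := Real.sqrt_pos.2 hnx
    have hs2 : Real.sqrt (n x) ^ 2 = n x := Real.sq_sqrt hnx.le
    set s := Real.sqrt (n x) with hsdef
    have e1 := my_key (g1 x) (gn x) (q1 x) (u1 x) s hs0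
      (my_grad n u1 (gn x) (g1 x) (q1 x) x hnx hgnx hg1x hq1x)
    have e2 := my_key (g2 x) (gn x) (q2 x) (u2 x) s hs0
      (my_grad n u2 (gn x) (g2 x) (q2 x) x hnx hgnx hg2x hq2x)
    have hin : (inner ℝ (gn x) ((2 * u1 x) • g1 x + (2 * u2 x) • g2 x) : ℝ)
        = 2 * u1 x * (inner ℝ (gn x) (g1 x) : ℝ) + 2 * u2 x * (inner ℝ (gn x) (g2 x) : ℝ) := by
      rw [inner_add_right, real_inner_smul_right, real_inner_smul_right]
    rw [hin, ← hs2, mul_add, e1, e2]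
    ring
  -- measurability
  have hmsqrt : AEMeasurable (fun x => Real.sqrt (n x)) volume :=
    my_aemeasurable_of_ae_continuousAt (hgn.mono fun x hx => hx.continuousAt)
  have hmu1 : AEMeasurable u1 volume :=
    my_aemeasurable_of_ae_continuousAt (hg1.mono fun x hx => hx.continuousAt)
  have hmu2 : AEMeasurable u2 volume :=
    my_aemeasurable_of_ae_continuousAt (hg2.mono fun x hx => hx.continuousAt)
  have hmn : AEMeasurable n volume :=
    (hmsqrt.mul hmsqrt).congr (hn.mono fun x hx => Real.mul_self_sqrt hx.le)
  have hgrad : ∀ (f : EuclideanSpace ℝ (Fin d) → ℝ)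
      (gf : EuclideanSpace ℝ (Fin d) → EuclideanSpace ℝ (Fin d)),
      (∀ᵐ x ∂volume, HasGradientAt f (gf x) x) → AEMeasurable gf volume := by
    intro f gf hf
    have hmes : Measurable (fun x =>
        (InnerProductSpace.toDual ℝ (EuclideanSpace ℝ (Fin d))).symm (fderiv ℝ f x)) :=
      (InnerProductSpace.toDual ℝ _).symm.continuous.measurable.comp (measurable_fderiv ℝ f)
    exact hmes.aemeasurable.congr (hf.mono fun x hx => by
      simp only [hx.hasFDerivAt.fderiv, LinearIsometryEquiv.symm_apply_apply])
  have hmgn := hgrad _ gn hgn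
  have hmg1 := hgrad _ g1 hg1
  have hmg2 := hgrad _ g2 hg2
  have hmB : AEStronglyMeasurable (fun x =>
      (inner ℝ (gn x) ((2 * u1 x) • g1 x + (2 * u2 x) • g2 x) : ℝ) / Real.sqrt (n x)) volume := by
    exact ((hmgn.inner (((hmu1.const_mul 2).smul hmg1).add
      ((hmu2.const_mul 2).smul hmg2))).div hmsqrt).aestronglyMeasurable
  have hmC : AEStronglyMeasurable
      (fun x => ‖gn x‖ ^ 2 / n x * (u1 x ^ 2 + u2 x ^ 2)) volume :=
    ((hgradn.aemeasurable.div hmn).mul hu.aemeasurable).aestronglyMeasurable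
  -- pointwise bounds
  have hub : ∀ᵐ x ∂volume, (u1 x ^ 2 + u2 x ^ 2) ≤ M ^ 2 * n x
      ∧ |u1 x| ≤ |M| * Real.sqrt (n x) ∧ |u2 x| ≤ |M| * Real.sqrt (n x) := by
    filter_upwards [hM, hn] with x hMx hnx
    have h0 : (0:ℝ) ≤ u1 x ^ 2 + u2 x ^ 2 := by positivity
    have hsq : Real.sqrt (u1 x ^ 2 + u2 x ^ 2) ^ 2 ≤ (M * Real.sqrt (n x)) ^ 2 :=
      pow_le_pow_left₀ (Real.sqrt_nonneg _) hMx 2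
    rw [Real.sq_sqrt h0, mul_pow, Real.sq_sqrt hnx.le] at hsq
    have hMabs : M * Real.sqrt (n x) ≤ |M| * Real.sqrt (n x) :=
      mul_le_mul_of_nonneg_right (le_abs_self M) (Real.sqrt_nonneg _)
    refine ⟨hsq, ?_, ?_⟩
    · exact le_trans (Real.abs_le_sqrt (by nlinarith)) (hMx.trans hMabs)
    · exact le_trans (Real.abs_le_sqrt (by nlinarith)) (hMx.trans hMabs)
  -- integrability of the cross term
  have hB : Integrable (fun x =>
      (inner ℝ (gn x) ((2 * u1 x) • g1 x + (2 * u2 x) • g2 x) : ℝ) / Real.sqrt (n x)) := by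
    have hbound : Integrable
        (fun x => |M| * (2 * ‖gn x‖ ^ 2 + (‖g1 x‖ ^ 2 + ‖g2 x‖ ^ 2))) volume := by
      have h5 := ((hgradn.const_mul 2).add hgradu).const_mul |M|
      exact h5
    refine Integrable.mono hbound hmB ?_
    filter_upwards [hn, hub] with x hnx hubx
    obtain ⟨-, h1, h2⟩ := hubx
    have hs0 : 0 < Real.sqrt (n x) := Real.sqrt_pos.2 hnx
    rw [Real.norm_eq_abs, Real.norm_eq_abs,
      abs_of_nonneg (by positivity : (0:ℝ) ≤ |M| * (2 * ‖gn x‖ ^ 2 + (‖g1 x‖ ^ 2 + ‖g2 x‖ ^ 2))),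
      abs_div, abs_of_nonneg (Real.sqrt_nonneg _), div_le_iff₀ hs0]
    calc |(inner ℝ (gn x) ((2 * u1 x) • g1 x + (2 * u2 x) • g2 x) : ℝ)|
        ≤ ‖gn x‖ * ‖(2 * u1 x) • g1 x + (2 * u2 x) • g2 x‖ := abs_real_inner_le_norm _ _
      _ ≤ ‖gn x‖ * (2 * |u1 x| * ‖g1 x‖ + 2 * |u2 x| * ‖g2 x‖) := by
          refine mul_le_mul_of_nonneg_left ?_ (norm_nonneg _)
          refine le_trans (norm_add_le _ _) ?_
          rw [norm_smul, norm_smul, Real.norm_eq_abs, Real.norm_eq_abs, abs_mul, abs_mul]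
          simp [abs_of_nonneg, mul_assoc]
      _ ≤ ‖gn x‖ * (2 * (|M| * Real.sqrt (n x)) * ‖g1 x‖ + 2 * (|M| * Real.sqrt (n x)) * ‖g2 x‖) := by
          gcongr
      _ ≤ |M| * (2 * ‖gn x‖ ^ 2 + (‖g1 x‖ ^ 2 + ‖g2 x‖ ^ 2)) * Real.sqrt (n x) := by
          have hgn0 := norm_nonneg (gn x)
          have hg10 := norm_nonneg (g1 x)
          have hg20 := norm_nonneg (g2 x)
          have hM0 := abs_nonneg M
          have hs0' := Real.sqrt_nonneg (n x)
          nlinarith [sq_nonneg (‖gn x‖ - ‖g1 x‖), sq_nonneg (‖gn x‖ - ‖g2 x‖),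
            mul_nonneg hM0 hs0']
  -- integrability of the last term
  have hC : Integrable (fun x => ‖gn x‖ ^ 2 / n x * (u1 x ^ 2 + u2 x ^ 2)) := by
    refine Integrable.mono (hgradn.const_mul (M ^ 2)) hmC ?_
    filter_upwards [hn, hub] with x hnx hubx
    obtain ⟨h1, -, -⟩ := hubx
    have h0 : (0:ℝ) ≤ u1 x ^ 2 + u2 x ^ 2 := by positivity
    rw [Real.norm_eq_abs, Real.norm_eq_abs,
      abs_of_nonneg (by positivity : (0:ℝ) ≤ ‖gn x‖ ^ 2 / n x * (u1 x ^ 2 + u2 x ^ 2)),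
      abs_of_nonneg (by positivity : (0:ℝ) ≤ M ^ 2 * ‖gn x‖ ^ 2)]
    calc ‖gn x‖ ^ 2 / n x * (u1 x ^ 2 + u2 x ^ 2)
        ≤ ‖gn x‖ ^ 2 / n x * (M ^ 2 * n x) := by
          exact mul_le_mul_of_nonneg_left h1 (by positivity)
      _ = M ^ 2 * ‖gn x‖ ^ 2 := by field_simp
  have hGB : Integrable (fun x => (‖g1 x‖ ^ 2 + ‖g2 x‖ ^ 2)
      - (inner ℝ (gn x) ((2 * u1 x) • g1 x + (2 * u2 x) • g2 x) : ℝ) / Real.sqrt (n x)) volume :=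
    hgradu.sub hB
  have hA : Integrable (fun x => n x * (‖q1 x‖ ^ 2 + ‖q2 x‖ ^ 2)) :=
    (hGB.add hC).congr (key.mono fun x hx => hx.symm)
  refine ⟨hA, hgradu, hB, hC, ?_⟩
  rw [integral_congr_ae key, integral_add hGB hC, integral_sub hgradu hB]
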